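/- Let g be a positive definite symmetric n×n real matrix and b a skew-symmetric n×n real matrix, and let G = [[−g⁻¹b, g⁻¹], [g − b g⁻¹ b, b g⁻¹]] and P = ½[[0, I], [I, 0]]. Then the 2n×2n matrix P·G is symmetric and positive definite. (This is the generalized Riemannian metric ⟨G·,·⟩ on T ⊕ T* determined by g and b.) -/

import Mathlib

open Matrix

private lemma posDef_smul_half {m : Type*} [Fintype m] {A : Matrix m m ℝ} (hA : A.PosDef) :
    ((1 / 2 : ℝ) • A).PosDef := by
  refine posDef_iff_dotProduct_mulVec.mpr ⟨?_, ?_⟩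
  · have h1 := hA.1
    unfold Matrix.IsHermitian at *
    rw [conjTranspose_smul, h1]
    simp
  · intro x hx
    have := hA.dotProduct_mulVec_pos hx
    rw [smul_mulVec, dotProduct_smul]
    positivity

private lemma posDef_conj {m : Type*} [Fintype m] [DecidableEq m]
    {A L : Matrix m m ℝ} (hA : A.PosDef) (hL : IsUnit L) :
    (Lᵀ * A * L).PosDef := by
  refine posDef_iff_dotProduct_mulVec.mpr ⟨?_, ?_⟩
  · have h1 : Aᵀ = A := by
      have := hA.1
      rwa [Matrix.IsHermitian, conjTranspose_eq_transpose_of_trivial] at this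
    rw [Matrix.IsHermitian, conjTranspose_eq_transpose_of_trivial, transpose_mul, transpose_mul,
      transpose_transpose, h1, Matrix.mul_assoc]
  · intro x hx
    have hxL : L *ᵥ x ≠ 0 := by
      have : Function.Injective (L.mulVec) := mulVec_injective_iff_isUnit.mpr hL
      intro h
      exact hx (this (by simpa using h))
    have := hA.dotProduct_mulVec_pos hxL
    calc (0:ℝ) < star (L *ᵥ x) ⬝ᵥ A *ᵥ (L *ᵥ x) := this
      _ = star x ⬝ᵥ (Lᵀ * A * L) *ᵥ x := by
        rw [star_trivial, star_trivial, ← mulVec_mulVec, ← mulVec_mulVec,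
          dotProduct_mulVec x, vecMul_transpose]

private lemma posDef_blockDiag {m : Type*} [Fintype m]
    {A D : Matrix m m ℝ} (hA : A.PosDef) (hD : D.PosDef) :
    (fromBlocks A 0 0 D).PosDef := by
  refine posDef_iff_dotProduct_mulVec.mpr ⟨?_, ?_⟩
  · have h1 : Aᵀ = A := by
      have := hA.1; rwa [Matrix.IsHermitian, conjTranspose_eq_transpose_of_trivial] at this
    have h2 : Dᵀ = D := by
      have := hD.1; rwa [Matrix.IsHermitian, conjTranspose_eq_transpose_of_trivial] at this
    rw [Matrix.IsHermitian, conjTranspose_eq_transpose_of_trivial, fromBlocks_transpose,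
      h1, h2, transpose_zero]
  · intro x hx
    have hsplit : x = Sum.elim (x ∘ Sum.inl) (x ∘ Sum.inr) := by
      ext (i | i) <;> rfl
    have hx' : x ∘ Sum.inl ≠ 0 ∨ x ∘ Sum.inr ≠ 0 := by
      by_contra h
      push_neg at h
      apply hx
      rw [hsplit, h.1, h.2]
      ext (i | i) <;> simp
    rw [star_trivial, hsplit, fromBlocks_mulVec, dotProduct_block]
    simp only [Sum.elim_inl, Sum.elim_inr, zero_mulVec, add_zero, zero_add]
    rcases hx' with h | h
    · exact add_pos_of_pos_of_nonneg (hA.dotProduct_mulVec_pos h) (by simpa using hD.posSemidef.dotProduct_mulVec_nonneg (x ∘ Sum.inr))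
    · exact add_pos_of_nonneg_of_pos (by simpa using hA.posSemidef.dotProduct_mulVec_nonneg (x ∘ Sum.inl)) (hD.dotProduct_mulVec_pos h)

theorem generalized_metric_posDef (n : ℕ) (g b : Matrix (Fin n) (Fin n) ℝ)
    (hg : g.PosDef) (hbskew : bᵀ = -b)
    (G P : Matrix (Fin n ⊕ Fin n) (Fin n ⊕ Fin n) ℝ)
    (hG : G = fromBlocks (-(g⁻¹ * b)) g⁻¹ (g - b * g⁻¹ * b) (b * g⁻¹))
    (hP : P = (1 / 2 : ℝ) • fromBlocks 0 1 1 0) :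
    (P * G).IsSymm ∧ (P * G).PosDef := by
  set L : Matrix (Fin n ⊕ Fin n) (Fin n ⊕ Fin n) ℝ := fromBlocks 1 0 (-b) 1 with hL
  set D : Matrix (Fin n ⊕ Fin n) (Fin n ⊕ Fin n) ℝ := fromBlocks g 0 0 g⁻¹ with hD
  have hLT : Lᵀ = fromBlocks 1 b 0 1 := by
    rw [hL, fromBlocks_transpose, transpose_neg, hbskew, neg_neg, transpose_one, transpose_zero]
  have key : P * G = (1 / 2 : ℝ) • (Lᵀ * D * L) := by
    rw [hP, hG, hLT, hL, hD, Matrix.smul_mul]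
    congr 1
    rw [fromBlocks_multiply, fromBlocks_multiply, fromBlocks_multiply]
    ext (i|i) (j|j) <;> simp [fromBlocks, Matrix.mul_assoc, sub_eq_add_neg]
  have hLunit : IsUnit L := by
    rw [hL]
    haveI : Invertible (1 : Matrix (Fin n) (Fin n) ℝ) := invertibleOne
    have : Invertible (fromBlocks (1 : Matrix (Fin n) (Fin n) ℝ) 0 (-b) 1) :=
      fromBlocksZero₁₂Invertible 1 (-b) 1
    exact isUnit_of_invertible _
  have hDpd : D.PosDef := posDef_blockDiag hg hg.inv
  have hPG : (P * G).PosDef := key ▸ posDef_smul_half (posDef_conj hDpd hLunit)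
  refine ⟨?_, hPG⟩
  have := hPG.1
  rwa [Matrix.IsHermitian, conjTranspose_eq_transpose_of_trivial] at this
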